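/- For every integer s > 13, if a [0,s]-almost intersecting graph F that is not a star has exactly 2s+3 edges, then F is a copy of K_2 + E_{s+1}: there exist two distinct vertices u, v and a set W of s+1 vertices with W ∩ {u,v} = ∅ such that the edge set of F is exactly { {u,v} } ∪ { {u,w} : w ∈ W } ∪ { {v,w} : w ∈ W }. -/

import Mathlib

private lemma pair_eq {α : Type*} [DecidableEq α] {B : Finset α} (hB : B.card = 2) {u : α}
    (hu : u ∈ B) : ∃ c, c ≠ u ∧ B = {u, c} := by
  obtain ⟨a, b, hab, rfl⟩ := Finset.card_eq_two.mp hB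
  rcases Finset.mem_insert.mp hu with h | h
  · subst h
    exact ⟨b, hab.symm, rfl⟩
  · simp only [Finset.mem_singleton] at h
    subst h
    exact ⟨a, hab, Finset.pair_comm _ _⟩

private lemma split_bound {α : Type*} [DecidableEq α] (G : Finset (Finset α))
    (hG : ∀ B ∈ G, B.card = 2) (w : α) (e : Finset α) (he : e.card = 2) (hwe : w ∉ e) :
    (G.filter fun B => w ∈ B).card ≤ (G.filter fun B => w ∈ B ∧ Disjoint e B).card + 2 := by
  classical
  obtain ⟨x, y, hxy, rfl⟩ := Finset.card_eq_two.mp he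
  have hsub : (G.filter fun B => w ∈ B ∧ ¬ Disjoint ({x, y} : Finset α) B) ⊆
      {({w, x} : Finset α), {w, y}} := by
    intro B hB
    simp only [Finset.mem_filter] at hB
    obtain ⟨hBG, hwB, hnd⟩ := hB
    obtain ⟨c, hcw, rfl⟩ := pair_eq (hG B hBG) hwB
    rw [Finset.disjoint_left] at hnd
    push_neg at hnd
    obtain ⟨z, hz1, hz2⟩ := hnd
    have hzc : z = c := by
      rcases Finset.mem_insert.mp hz2 with rfl | h
      · exact absurd hz1 hwe
      · simpa using h
    subst hzc
    rcases Finset.mem_insert.mp hz1 with rfl | h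
    · exact Finset.mem_insert_self _ _
    · simp only [Finset.mem_singleton] at h
      subst h
      simp
  have h2 : (G.filter fun B => w ∈ B ∧ ¬ Disjoint ({x, y} : Finset α) B).card ≤ 2 :=
    (Finset.card_le_card hsub).trans ((Finset.card_insert_le _ _).trans (by simp))
  have hpart := Finset.card_filter_add_card_filter_not
    (s := G.filter fun B => w ∈ B) (p := fun B => Disjoint ({x, y} : Finset α) B)
  rw [Finset.filter_filter, Finset.filter_filter] at hpart
  omega

/-- For every `s > 13`, if a `[0,s]`-almost intersecting graph that is not
a star has exactly `2s+3` edges, then it is a copy of `K_2 + E_{s+1}`. -/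
theorem stmt_13 {α : Type*} [DecidableEq α] (s : ℕ) (hs : 13 < s)
    (F : Finset (Finset α))
    (huniform : ∀ A ∈ F, A.card = 2)
    (hai : ∀ A ∈ F, (F.filter fun B => Disjoint A B).card ≤ s)
    (hstar : ¬ ∃ v : α, ∀ e ∈ F, v ∈ e)
    (hcard : F.card = 2 * s + 3) :
    ∃ (u v : α) (W : Finset α), u ≠ v ∧ W.card = s + 1 ∧ u ∉ W ∧ v ∉ W ∧
      F = insert {u, v} ((W.image fun w => {u, w}) ∪ (W.image fun w => {v, w})) := by
  classical
  set deg : α → ℕ := fun x => (F.filter fun B => x ∈ B).card with hdeg_def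
  have hdisj_pair : ∀ (x y : α) (B : Finset α),
      Disjoint ({x, y} : Finset α) B ↔ x ∉ B ∧ y ∉ B := by
    intro x y B
    simp [Finset.disjoint_left]
  -- every edge {x,y} has deg x + deg y ≥ s + 4
  have key : ∀ x y : α, x ≠ y → ({x, y} : Finset α) ∈ F → s + 4 ≤ deg x + deg y := by
    intro x y hxy he
    have hdisj := hai _ he
    have hpart := Finset.card_filter_add_card_filter_not
      (s := F) (p := fun B => Disjoint ({x, y} : Finset α) B)
    have hform : (F.filter fun B => ¬ Disjoint ({x, y} : Finset α) B)
        = (F.filter fun B => x ∈ B) ∪ (F.filter fun B => y ∈ B) := by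
      rw [← Finset.filter_or]
      apply Finset.filter_congr
      intro B _
      rw [hdisj_pair]
      tauto
    have hinter : (F.filter fun B => x ∈ B) ∩ (F.filter fun B => y ∈ B)
        = {({x, y} : Finset α)} := by
      ext B
      simp only [Finset.mem_inter, Finset.mem_filter, Finset.mem_singleton]
      constructor
      · rintro ⟨⟨hBF, hxB⟩, -, hyB⟩
        have hsub : ({x, y} : Finset α) ⊆ B := by
          intro z hz
          rcases Finset.mem_insert.mp hz with rfl | hz
          · exact hxB
          · simpa using Finset.mem_singleton.mp hz ▸ hyB
        exact ((Finset.eq_of_subset_of_card_le hsub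
          (by rw [huniform B hBF, Finset.card_pair hxy])).symm)
      · rintro rfl
        exact ⟨⟨he, Finset.mem_insert_self _ _⟩, he, by simp⟩
    have huni := Finset.card_union_add_card_inter
      (F.filter fun B => x ∈ B) (F.filter fun B => y ∈ B)
    rw [hinter, Finset.card_singleton] at huni
    rw [hform] at hpart
    simp only [hdeg_def]
    omega
  have hF_ne : F.Nonempty := Finset.card_pos.mp (by omega)
  -- max degree vertex u
  obtain ⟨u, huV, humax'⟩ := (F.biUnion id).exists_max_image deg
    (by
      obtain ⟨A, hA⟩ := hF_ne
      have : A.Nonempty := Finset.card_pos.mp (by rw [huniform A hA]; omega)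
      obtain ⟨x, hx⟩ := this
      exact ⟨x, Finset.mem_biUnion.mpr ⟨A, hA, hx⟩⟩)
  have humax : ∀ x, deg x ≤ deg u := by
    intro x
    by_cases hx : x ∈ F.biUnion id
    · exact humax' x hx
    · have : deg x = 0 := by
        rw [hdeg_def]
        simp only [Finset.card_eq_zero, Finset.filter_eq_empty_iff]
        intro B hB hxB
        exact hx (Finset.mem_biUnion.mpr ⟨B, hB, hxB⟩)
      omega
  -- not a star at u
  push_neg at hstar
  obtain ⟨e₀, he₀F, hue₀⟩ := hstar u
  set N : Finset (Finset α) := F.filter fun B => u ∉ B with hN_def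
  have hNcard : deg u + N.card = 2 * s + 3 := by
    rw [hdeg_def, hN_def, ← hcard]
    exact Finset.card_filter_add_card_filter_not (fun B => u ∈ B)
  have hNuniform : ∀ B ∈ N, B.card = 2 := fun B hB => huniform B (Finset.mem_filter.mp hB).1
  set degN : α → ℕ := fun x => (N.filter fun B => x ∈ B).card with hdegN_def
  have he₀N : e₀ ∈ N := Finset.mem_filter.mpr ⟨he₀F, hue₀⟩
  -- deg u ≤ s + 2
  have hds2 : deg u ≤ s + 2 := by
    have h1 := split_bound F huniform u e₀ (huniform e₀ he₀F) hue₀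
    have h2 : (F.filter fun B => u ∈ B ∧ Disjoint e₀ B) ⊆ F.filter fun B => Disjoint e₀ B := by
      intro B hB
      simp only [Finset.mem_filter] at hB ⊢
      exact ⟨hB.1, hB.2.2⟩
    have h3 := (Finset.card_le_card h2).trans (hai e₀ he₀F)
    simp only [hdeg_def]
    omega
  -- L6 : for u-neighbours c, N.card ≤ s + degN c
  have hL6 : ∀ c : α, c ≠ u → ({u, c} : Finset α) ∈ F → N.card ≤ s + degN c := by
    intro c hcu hcF
    have hdisj := hai _ hcF
    have hsub : (N.filter fun B => c ∉ B) ⊆ F.filter fun B => Disjoint ({u, c} : Finset α) B := by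
      intro B hB
      simp only [hN_def, Finset.mem_filter, Finset.filter_filter] at hB ⊢
      obtain ⟨h1, h2, h3⟩ := hB
      exact ⟨h1, (hdisj_pair u c B).mpr ⟨h2, h3⟩⟩
    have hc := (Finset.card_le_card hsub).trans hdisj
    have hp := Finset.card_filter_add_card_filter_not (s := N) (p := fun B => c ∈ B)
    simp only [hdegN_def]
    omega
  -- the neighbourhood of u
  set U : Finset α := (F.filter fun B => u ∈ B).biUnion (fun B => B.erase u) with hU_def
  have hU_mem : ∀ c, c ∈ U ↔ (c ≠ u ∧ ({u, c} : Finset α) ∈ F) := by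
    intro c
    simp only [hU_def, Finset.mem_biUnion, Finset.mem_filter, Finset.mem_erase]
    constructor
    · rintro ⟨B, ⟨hBF, huB⟩, hcu, hcB⟩
      obtain ⟨c', hc'u, rfl⟩ := pair_eq (huniform B hBF) huB
      have hcc : c = c' := by
        rcases Finset.mem_insert.mp hcB with h | h
        · exact absurd h hcu
        · simpa using h
      subst hcc
      exact ⟨hcu, hBF⟩
    · rintro ⟨hcu, hF⟩
      exact ⟨{u, c}, ⟨hF, Finset.mem_insert_self _ _⟩, hcu, by simp⟩
  have hU_card : U.card = deg u := by
    rw [hU_def]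
    rw [Finset.card_biUnion]
    · have h1 : ∀ B ∈ (F.filter fun B => u ∈ B), (B.erase u).card = 1 := by
        intro B hB
        simp only [Finset.mem_filter] at hB
        rw [Finset.card_erase_of_mem hB.2, huniform B hB.1]
      rw [Finset.sum_congr rfl h1, Finset.sum_const, smul_eq_mul, mul_one]
    · intro B hB B' hB' hne
      simp only [Finset.mem_coe, Finset.mem_filter, Function.onFun] at hB hB' ⊢
      rw [Finset.disjoint_left]
      intro a ha ha'
      rw [Finset.mem_erase] at ha ha'
      obtain ⟨c, hcu, rfl⟩ := pair_eq (huniform B hB.1) hB.2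
      obtain ⟨c', hc'u, rfl⟩ := pair_eq (huniform B' hB'.1) hB'.2
      have h1 : a = c := by
        rcases Finset.mem_insert.mp ha.2 with h | h
        · exact absurd h ha.1
        · simpa using h
      have h2 : a = c' := by
        rcases Finset.mem_insert.mp ha'.2 with h | h
        · exact absurd h ha'.1
        · simpa using h
      exact hne (by rw [← h1, ← h2])
  -- counting : U.card * N.card ≤ U.card * s + 2 * N.card
  have hsum2 : (∑ c ∈ U, degN c) ≤ 2 * N.card := by
    have hrw : ∀ c : α, degN c = ∑ B ∈ N, if c ∈ B then 1 else 0 := by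
      intro c
      rw [hdegN_def]
      exact Finset.card_filter _ _
    calc (∑ c ∈ U, degN c) = ∑ c ∈ U, ∑ B ∈ N, if c ∈ B then 1 else 0 := by
          exact Finset.sum_congr rfl fun c _ => hrw c
      _ = ∑ B ∈ N, ∑ c ∈ U, if c ∈ B then 1 else 0 := Finset.sum_comm
      _ = ∑ B ∈ N, (U.filter fun c => c ∈ B).card := by
          exact Finset.sum_congr rfl fun B _ => (Finset.card_filter _ _).symm
      _ ≤ ∑ B ∈ N, 2 := by
          apply Finset.sum_le_sum
          intro B hB
          rw [Finset.filter_mem_eq_inter]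
          exact (Finset.card_le_card Finset.inter_subset_right).trans_eq (hNuniform B hB)
      _ = 2 * N.card := by rw [Finset.sum_const, smul_eq_mul, mul_comm]
  have hsum1 : deg u * N.card ≤ deg u * s + 2 * N.card := by
    have h1 : (∑ c ∈ U, N.card) ≤ ∑ c ∈ U, (s + degN c) := by
      apply Finset.sum_le_sum
      intro c hc
      obtain ⟨hcu, hcF⟩ := (hU_mem c).mp hc
      have := hL6 c hcu hcF
      omega
    rw [Finset.sum_const, smul_eq_mul, Finset.sum_add_distrib, Finset.sum_const, smul_eq_mul,
      hU_card] at h1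
    omega
  -- deg u ≥ (s+4)/2
  have h2d : s + 4 ≤ 2 * deg u := by
    obtain ⟨A, hA⟩ := hF_ne
    obtain ⟨x, y, hxy, rfl⟩ := Finset.card_eq_two.mp (huniform A hA)
    have := key x y hxy hA
    have := humax x
    have := humax y
    omega
  -- deg u ≥ s + 1
  have hd_ge : s + 1 ≤ deg u := by
    by_contra hlt
    push_neg at hlt
    have hds : deg u ≤ s := by omega
    have hc1 : (deg u : ℤ) * N.card ≤ (deg u : ℤ) * s + 2 * N.card := by exact_mod_cast hsum1
    have hc2 : ((deg u : ℤ)) + N.card = 2 * s + 3 := by exact_mod_cast hNcard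
    have hc3 : (s : ℤ) + 4 ≤ 2 * deg u := by exact_mod_cast h2d
    have hc4 : (deg u : ℤ) ≤ s := by exact_mod_cast hds
    have hc5 : (13 : ℤ) < s := by exact_mod_cast hs
    nlinarith [mul_nonneg (by linarith : (0:ℤ) ≤ 2 * (deg u : ℤ) - s - 4)
      (by linarith : (0:ℤ) ≤ (s : ℤ) - deg u)]

  -- deg x ≤ 1 + degN x for x ≠ u
  have hdeg_split : ∀ x : α, x ≠ u → deg x ≤ 1 + degN x := by
    intro x hxu
    have hp := Finset.card_filter_add_card_filter_not
      (s := F.filter fun B => x ∈ B) (p := fun B => u ∈ B)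
    rw [Finset.filter_filter, Finset.filter_filter] at hp
    have h1 : (F.filter fun B => x ∈ B ∧ u ∈ B) ⊆ {({u, x} : Finset α)} := by
      intro B hB
      simp only [Finset.mem_filter] at hB
      obtain ⟨hBF, hxB, huB⟩ := hB
      obtain ⟨c, hcu, rfl⟩ := pair_eq (huniform B hBF) huB
      have hxc : x = c := by
        rcases Finset.mem_insert.mp hxB with h | h
        · exact absurd h hxu
        · simpa using h
      subst hxc
      simp
    have h1' := (Finset.card_le_card h1).trans_eq (Finset.card_singleton _)
    have h2 : (F.filter fun B => x ∈ B ∧ u ∉ B) = N.filter fun B => x ∈ B := by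
      rw [hN_def, Finset.filter_filter]
      apply Finset.filter_congr
      intro B _
      tauto
    simp only [hdeg_def, hdegN_def]
    rw [← h2]
    omega
  have keyN : ∀ x y : α, x ≠ y → ({x, y} : Finset α) ∈ N → s + 2 ≤ degN x + degN y := by
    intro x y hxy hN
    have hmem := Finset.mem_filter.mp hN
    have hxu : x ≠ u := fun h => hmem.2 (h ▸ Finset.mem_insert_self _ _)
    have hyu : y ≠ u := fun h => hmem.2 (by rw [h]; simp)
    have h1 := key x y hxy hmem.1
    have h2 := hdeg_split x hxu
    have h3 := hdeg_split y hyu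
    omega
  -- max degN vertex v
  obtain ⟨v, hvV, hvmax'⟩ := (N.biUnion id).exists_max_image degN
    (by
      have : e₀.Nonempty := Finset.card_pos.mp (by rw [huniform e₀ he₀F]; omega)
      obtain ⟨x, hx⟩ := this
      exact ⟨x, Finset.mem_biUnion.mpr ⟨e₀, he₀N, hx⟩⟩)
  have hvmax : ∀ x, degN x ≤ degN v := by
    intro x
    by_cases hx : x ∈ N.biUnion id
    · exact hvmax' x hx
    · have hz : degN x = 0 := by
        simp only [hdegN_def, Finset.card_eq_zero, Finset.filter_eq_empty_iff]
        intro B hB hxB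
        exact hx (Finset.mem_biUnion.mpr ⟨B, hB, hxB⟩)
      omega
  have hv_ge : s + 2 ≤ 2 * degN v := by
    obtain ⟨x, y, hxy, he⟩ := Finset.card_eq_two.mp (huniform e₀ he₀F)
    have h1 := keyN x y hxy (he ▸ he₀N)
    have h2 := hvmax x
    have h3 := hvmax y
    omega
  -- every edge of N contains v
  have hL9 : ∀ e ∈ N, v ∈ e := by
    intro e heN
    by_contra hve
    obtain ⟨heF, hue⟩ := Finset.mem_filter.mp heN
    have hA : deg u ≤ (F.filter fun B => u ∈ B ∧ Disjoint e B).card + 2 := by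
      have := split_bound F huniform u e (huniform e heF) hue
      simpa [hdeg_def] using this
    have hB : degN v ≤ (N.filter fun B => v ∈ B ∧ Disjoint e B).card + 2 := by
      have := split_bound N hNuniform v e (huniform e heF) hve
      simpa [hdegN_def] using this
    have hsubA : (F.filter fun B => u ∈ B ∧ Disjoint e B) ⊆ F.filter fun B => Disjoint e B := by
      intro B hB'
      simp only [Finset.mem_filter] at hB' ⊢
      exact ⟨hB'.1, hB'.2.2⟩
    have hsubB : (N.filter fun B => v ∈ B ∧ Disjoint e B) ⊆ F.filter fun B => Disjoint e B := by
      intro B hB'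
      simp only [hN_def, Finset.mem_filter, Finset.filter_filter] at hB' ⊢
      tauto
    have hdAB : Disjoint (F.filter fun B => u ∈ B ∧ Disjoint e B)
        (N.filter fun B => v ∈ B ∧ Disjoint e B) := by
      rw [Finset.disjoint_left]
      intro B h1 h2
      simp only [hN_def, Finset.mem_filter, Finset.filter_filter] at h1 h2
      tauto
    have hcup := Finset.card_union_of_disjoint hdAB
    have hle := (Finset.card_le_card (Finset.union_subset hsubA hsubB)).trans (hai e heF)
    omega
  -- for c ≠ v, degN c ≤ 1, and if degN c ≥ 1 then {v,c} ∈ N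
  have hNc : ∀ c : α, c ≠ v → degN c ≤ 1 := by
    intro c hcv
    have hsub : (N.filter fun B => c ∈ B) ⊆ {({v, c} : Finset α)} := by
      intro B hB
      simp only [Finset.mem_filter, Finset.mem_singleton] at hB ⊢
      obtain ⟨hBN, hcB⟩ := hB
      have hvB := hL9 B hBN
      obtain ⟨c', hc'v, rfl⟩ := pair_eq (hNuniform B hBN) hvB
      have : c = c' := by
        rcases Finset.mem_insert.mp hcB with h | h
        · exact absurd h hcv
        · simpa using h
      rw [this]
    exact (Finset.card_le_card hsub).trans_eq (Finset.card_singleton _)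
  have hvce : ∀ c : α, c ≠ v → 1 ≤ degN c → ({v, c} : Finset α) ∈ N := by
    intro c hcv h1
    obtain ⟨B, hB⟩ := Finset.card_pos.mp h1
    simp only [Finset.mem_filter] at hB
    obtain ⟨hBN, hcB⟩ := hB
    have hvB := hL9 B hBN
    obtain ⟨c', hc'v, rfl⟩ := pair_eq (hNuniform B hBN) hvB
    have hcc : c = c' := by
      rcases Finset.mem_insert.mp hcB with h | h
      · exact absurd h hcv
      · simpa using h
    rw [hcc]
    exact hBN
  -- deg u = s + 2 and N.card = s + 1
  have hd_eq : deg u = s + 2 := by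
    have hexc : ∃ c ∈ U, c ≠ v := by
      by_contra h
      push_neg at h
      have hsub : U ⊆ {v} := fun c hc => Finset.mem_singleton.mpr (h c hc)
      have := (Finset.card_le_card hsub).trans_eq (Finset.card_singleton _)
      omega
    obtain ⟨c, hcU, hcv⟩ := hexc
    obtain ⟨hcu, hcF⟩ := (hU_mem c).mp hcU
    have h1 := hL6 c hcu hcF
    have h2 := hNc c hcv
    omega
  have hNcard' : N.card = s + 1 := by omega
  -- v is a neighbour of u
  have hinj : ∀ c ∈ U, ∀ c' ∈ U, c ≠ v → c' ≠ v →
      ({v, c} : Finset α) = ({v, c'} : Finset α) → c = c' := by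
    intro c _ c' _ hcv hc'v h
    have : c ∈ ({v, c'} : Finset α) := h ▸ (by simp)
    rcases Finset.mem_insert.mp this with h' | h'
    · exact absurd h' hcv
    · simpa using h'
  have hvU : v ∈ U := by
    by_contra hvU
    have himg : U.image (fun c => ({v, c} : Finset α)) ⊆ N := by
      intro B hB
      obtain ⟨c, hcU, rfl⟩ := Finset.mem_image.mp hB
      have hcv : c ≠ v := fun h => hvU (h ▸ hcU)
      obtain ⟨hcu, hcF⟩ := (hU_mem c).mp hcU
      have h1 : 1 ≤ degN c := by have := hL6 c hcu hcF; omega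
      exact hvce c hcv h1
    have hinj' : Set.InjOn (fun c => ({v, c} : Finset α)) U := by
      intro c hc c' hc' h
      exact hinj c hc c' hc' (fun h' => hvU (h' ▸ hc)) (fun h' => hvU (h' ▸ hc')) h
    have := Finset.card_le_card himg
    rw [Finset.card_image_of_injOn hinj'] at this
    omega
  obtain ⟨hvu, huvF⟩ := (hU_mem v).mp hvU
  set W : Finset α := U.erase v with hW_def
  have hW_card : W.card = s + 1 := by
    rw [hW_def, Finset.card_erase_of_mem hvU, hU_card]
    omega
  have huU : u ∉ U := fun h => ((hU_mem u).mp h).1 rfl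
  have huW : u ∉ W := fun h => huU (Finset.mem_of_mem_erase h)
  have hvW : v ∉ W := Finset.notMem_erase _ _
  have hWv : ∀ w ∈ W, w ≠ v := fun w hw => (Finset.mem_erase.mp hw).1
  -- N is exactly the star of v over W
  have himgN : W.image (fun w => ({v, w} : Finset α)) = N := by
    apply Finset.eq_of_subset_of_card_le
    · intro B hB
      obtain ⟨w, hwW, rfl⟩ := Finset.mem_image.mp hB
      have hwU := Finset.mem_of_mem_erase hwW
      obtain ⟨hwu, hwF⟩ := (hU_mem w).mp hwU
      have h1 : 1 ≤ degN w := by have := hL6 w hwu hwF; omega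
      exact hvce w (hWv w hwW) h1
    · have : (W.image (fun w => ({v, w} : Finset α))).card = s + 1 := by
        rw [Finset.card_image_of_injOn, hW_card]
        intro c hc c' hc' h
        exact hinj c (Finset.mem_of_mem_erase hc) c' (Finset.mem_of_mem_erase hc')
          (hWv c hc) (hWv c' hc') h
      omega
  -- the star of u
  have himgU : F.filter (fun B => u ∈ B) = U.image (fun c => ({u, c} : Finset α)) := by
    ext B
    simp only [Finset.mem_filter, Finset.mem_image]
    constructor
    · rintro ⟨hBF, huB⟩
      obtain ⟨c, hcu, rfl⟩ := pair_eq (huniform B hBF) huB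
      exact ⟨c, (hU_mem c).mpr ⟨hcu, hBF⟩, rfl⟩
    · rintro ⟨c, hcU, rfl⟩
      exact ⟨((hU_mem c).mp hcU).2, Finset.mem_insert_self _ _⟩
  refine ⟨u, v, W, fun h => hvu h.symm, hW_card, huW, hvW, ?_⟩
  have hsplit : (F.filter fun B => u ∈ B) ∪ N = F := by
    rw [hN_def]
    exact Finset.filter_union_filter_not_eq _ F
  have hUins : U = insert v W := by rw [hW_def, Finset.insert_erase hvU]
  rw [← hsplit, himgU, ← himgN, hUins, Finset.image_insert, Finset.insert_union]
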